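/- Let F be a real n×p matrix, let k ≥ 1 and let k₁,…,k_l be positive integers with k + k₁ + ⋯ + k_l ≤ p. Then θ_{k, k₁+⋯+k_l} ≤ √(δ_{k+k₁}² + ⋯ + δ_{k+k_l}²), where δ and θ are respectively the restricted isometry and restricted orthogonality constants of F. -/

import Mathlib

/-- A vector `v ∈ ℝ^p` is `k`-sparse if it has at most `k` nonzero entries. -/
def IsSparse {p : ℕ} (k : ℕ) (v : Fin p → ℝ) : Prop :=
  ∃ s : Finset (Fin p), s.card ≤ k ∧ ∀ i ∉ s, v i = 0

/-- The ℓ₂ norm of a vector in `ℝ^m`. -/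
noncomputable def l2norm {m : ℕ} (v : Fin m → ℝ) : ℝ :=
  Real.sqrt (∑ i, v i ^ 2)

/-- The ℓ₁ norm of a vector in `ℝ^m`. -/
def l1norm {m : ℕ} (v : Fin m → ℝ) : ℝ := ∑ i, |v i|

/-- The `k`-restricted isometry constant `δ_k` of `F`: the smallest `δ` such that
`√(1-δ)‖c‖₂ ≤ ‖Fc‖₂ ≤ √(1+δ)‖c‖₂` for every `k`-sparse vector `c`. -/
noncomputable def ripConst {n p : ℕ} (F : Matrix (Fin n) (Fin p) ℝ) (k : ℕ) : ℝ :=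
  sInf {δ : ℝ | ∀ c : Fin p → ℝ, IsSparse k c →
    Real.sqrt (1 - δ) * l2norm c ≤ l2norm (F.mulVec c) ∧
    l2norm (F.mulVec c) ≤ Real.sqrt (1 + δ) * l2norm c}

/-- The `(k,k')`-restricted orthogonality constant `θ_{k,k'}` of `F`: the smallest `θ` such
that `|⟨Fc, Fc'⟩| ≤ θ‖c‖₂‖c'‖₂` for all `k`-sparse `c` and `k'`-sparse `c'` with disjoint
supports. -/
noncomputable def roConst {n p : ℕ} (F : Matrix (Fin n) (Fin p) ℝ) (k k' : ℕ) : ℝ :=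
  sInf {θ : ℝ | ∀ c c' : Fin p → ℝ, IsSparse k c → IsSparse k' c' →
    (∀ i, c i = 0 ∨ c' i = 0) →
    |∑ i, F.mulVec c i * F.mulVec c' i| ≤ θ * (l2norm c * l2norm c')}

-- helpers
lemma sum_sq_nonneg' {m : ℕ} (v : Fin m → ℝ) : 0 ≤ ∑ i, v i ^ 2 :=
  Finset.sum_nonneg fun i _ => sq_nonneg _

lemma l2norm_nonneg' {m : ℕ} (v : Fin m → ℝ) : 0 ≤ l2norm v := Real.sqrt_nonneg _

lemma l2norm_sq' {m : ℕ} (v : Fin m → ℝ) : l2norm v ^ 2 = ∑ i, v i ^ 2 :=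
  Real.sq_sqrt (sum_sq_nonneg' v)

lemma l2norm_eq_zero' {m : ℕ} {v : Fin m → ℝ} (h : l2norm v = 0) : ∀ i, v i = 0 := by
  intro i
  have h2 : ∑ j, v j ^ 2 = 0 := by
    have h3 := l2norm_sq' v
    rw [h] at h3
    simpa using h3.symm
  have h4 := (Finset.sum_eq_zero_iff_of_nonneg (fun j _ => sq_nonneg (v j))).1 h2 i
    (Finset.mem_univ i)
  exact pow_eq_zero_iff (two_ne_zero) |>.1 h4

def ripSet {n p : ℕ} (F : Matrix (Fin n) (Fin p) ℝ) (K : ℕ) : Set ℝ :=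
  {δ : ℝ | ∀ c : Fin p → ℝ, IsSparse K c →
    Real.sqrt (1 - δ) * l2norm c ≤ l2norm (F.mulVec c) ∧
    l2norm (F.mulVec c) ≤ Real.sqrt (1 + δ) * l2norm c}

lemma ripSet_nonempty {n p : ℕ} (F : Matrix (Fin n) (Fin p) ℝ) (K : ℕ) :
    (ripSet F K).Nonempty := by
  refine ⟨1 + ∑ j, ∑ i, F j i ^ 2, fun c _ => ⟨?_, ?_⟩⟩
  · have h1 : Real.sqrt (1 - (1 + ∑ j, ∑ i, F j i ^ 2)) = 0 := by
      rw [Real.sqrt_eq_zero']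
      have : (0:ℝ) ≤ ∑ j, ∑ i, F j i ^ 2 :=
        Finset.sum_nonneg fun j _ => sum_sq_nonneg' _
      linarith
    rw [h1, zero_mul]
    exact l2norm_nonneg' _
  · have hrow : ∀ j, (F.mulVec c j) ^ 2 ≤ (∑ i, F j i ^ 2) * ∑ i, c i ^ 2 := by
      intro j
      have := Finset.sum_mul_sq_le_sq_mul_sq Finset.univ (fun i => F j i) c
      simpa [Matrix.mulVec, dotProduct] using this
    have hsum : ∑ j, (F.mulVec c j) ^ 2 ≤ (∑ j, ∑ i, F j i ^ 2) * ∑ i, c i ^ 2 := by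
      calc ∑ j, (F.mulVec c j) ^ 2 ≤ ∑ j, (∑ i, F j i ^ 2) * ∑ i, c i ^ 2 :=
            Finset.sum_le_sum fun j _ => hrow j
        _ = (∑ j, ∑ i, F j i ^ 2) * ∑ i, c i ^ 2 := by rw [Finset.sum_mul]
    have hA : (0:ℝ) ≤ ∑ j, ∑ i, F j i ^ 2 := Finset.sum_nonneg fun j _ => sum_sq_nonneg' _
    calc l2norm (F.mulVec c) = Real.sqrt (∑ j, (F.mulVec c j) ^ 2) := rfl
      _ ≤ Real.sqrt ((∑ j, ∑ i, F j i ^ 2) * ∑ i, c i ^ 2) := Real.sqrt_le_sqrt hsum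
      _ ≤ Real.sqrt ((1 + (1 + ∑ j, ∑ i, F j i ^ 2)) * ∑ i, c i ^ 2) := by
          apply Real.sqrt_le_sqrt
          apply mul_le_mul_of_nonneg_right _ (sum_sq_nonneg' c)
          linarith
      _ = Real.sqrt (1 + (1 + ∑ j, ∑ i, F j i ^ 2)) * l2norm c := by
          rw [Real.sqrt_mul (by linarith)]; rfl

lemma mem_ripSet_ge {n p : ℕ} {F : Matrix (Fin n) (Fin p) ℝ} {K : ℕ} (hp : 0 < p)
    (hK : 1 ≤ K) {δ : ℝ} (hδ : δ ∈ ripSet F K) : -1 ≤ δ := by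
  by_contra h
  push_neg at h
  set e : Fin p → ℝ := fun i => if i = ⟨0, hp⟩ then 1 else 0 with he
  have hsp : IsSparse K e := by
    refine ⟨{⟨0, hp⟩}, by simpa using hK, fun i hi => ?_⟩
    simp only [Finset.mem_singleton] at hi
    simp [he, hi]
  have hnorm : l2norm e = 1 := by
    have : ∑ i, e i ^ 2 = 1 := by
      rw [he]
      simp [apply_ite (· ^ 2 : ℝ → ℝ)]
    simp [l2norm, this]
  obtain ⟨h1, h2⟩ := hδ e hsp
  rw [hnorm, mul_one] at h1 h2
  have h3 : Real.sqrt (1 + δ) = 0 := Real.sqrt_eq_zero'.2 (by linarith)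
  rw [h3] at h2
  have h4 : (0:ℝ) < Real.sqrt (1 - δ) := Real.sqrt_pos.2 (by linarith)
  have := l2norm_nonneg' (F.mulVec e)
  linarith

lemma ripSet_bddBelow {n p : ℕ} {F : Matrix (Fin n) (Fin p) ℝ} {K : ℕ} (hp : 0 < p)
    (hK : 1 ≤ K) : BddBelow (ripSet F K) :=
  ⟨-1, fun _ hδ => mem_ripSet_ge hp hK hδ⟩

lemma ripSet_closed {n p : ℕ} (F : Matrix (Fin n) (Fin p) ℝ) (K : ℕ) :
    IsClosed (ripSet F K) := by
  have : ripSet F K = ⋂ (c : Fin p → ℝ) (_ : IsSparse K c),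
      ({δ : ℝ | Real.sqrt (1 - δ) * l2norm c ≤ l2norm (F.mulVec c)} ∩
       {δ : ℝ | l2norm (F.mulVec c) ≤ Real.sqrt (1 + δ) * l2norm c}) := by
    ext δ
    simp only [ripSet, Set.mem_setOf_eq, Set.mem_iInter, Set.mem_inter_iff]
  rw [this]
  refine isClosed_iInter fun c => isClosed_iInter fun _ => IsClosed.inter ?_ ?_
  · exact isClosed_le (by continuity) continuous_const
  · exact isClosed_le continuous_const (by continuity)

lemma ripConst_mem {n p : ℕ} (F : Matrix (Fin n) (Fin p) ℝ) {K : ℕ} (hp : 0 < p)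
    (hK : 1 ≤ K) : ripConst F K ∈ ripSet F K :=
  (ripSet_closed F K).csInf_mem (ripSet_nonempty F K) (ripSet_bddBelow hp hK)

lemma ortho_one_sided {n p : ℕ} (F : Matrix (Fin n) (Fin p) ℝ) {K : ℕ} {δ : ℝ}
    (hδ : -1 ≤ δ) (hrip : δ ∈ ripSet F K)
    {k k' : ℕ} (hkk : k + k' ≤ K)
    (u v : Fin p → ℝ) (hu : IsSparse k u) (hv : IsSparse k' v)
    (hdisj : ∀ i, u i = 0 ∨ v i = 0)
    (hu1 : ∑ i, u i ^ 2 = 1) (hv1 : ∑ i, v i ^ 2 = 1) :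
    ∑ i, F.mulVec u i * F.mulVec v i ≤ δ := by
  obtain ⟨s, hs, hs0⟩ := hu
  obtain ⟨t, ht, ht0⟩ := hv
  have hspadd : IsSparse K (u + v) := by
    refine ⟨s ∪ t, le_trans (Finset.card_union_le s t) (le_trans (add_le_add hs ht) hkk),
      fun i hi => ?_⟩
    simp only [Finset.mem_union, not_or] at hi
    simp [hs0 i hi.1, ht0 i hi.2]
  have hspsub : IsSparse K (u - v) := by
    refine ⟨s ∪ t, le_trans (Finset.card_union_le s t) (le_trans (add_le_add hs ht) hkk),
      fun i hi => ?_⟩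
    simp only [Finset.mem_union, not_or] at hi
    simp [hs0 i hi.1, ht0 i hi.2]
  have hcross : ∑ i, u i * v i = 0 :=
    Finset.sum_eq_zero fun i _ => by rcases hdisj i with h | h <;> simp [h]
  have hadd2 : ∑ i, (u i + v i) ^ 2 = 2 := by
    have h1 : ∑ i, (u i + v i) ^ 2 =
        (∑ i, u i ^ 2) + (∑ i, v i ^ 2) + 2 * ∑ i, u i * v i := by
      rw [Finset.mul_sum, ← Finset.sum_add_distrib, ← Finset.sum_add_distrib]
      exact Finset.sum_congr rfl fun i _ => by ring
    rw [h1, hu1, hv1, hcross]; ring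
  have hsub2 : ∑ i, (u i - v i) ^ 2 = 2 := by
    have h1 : ∑ i, (u i - v i) ^ 2 =
        (∑ i, u i ^ 2) + (∑ i, v i ^ 2) - 2 * ∑ i, u i * v i := by
      rw [Finset.mul_sum, ← Finset.sum_add_distrib, ← Finset.sum_sub_distrib]
      exact Finset.sum_congr rfl fun i _ => by ring
    rw [h1, hu1, hv1, hcross]; ring
  have hladd : l2norm (u + v) = Real.sqrt 2 := by
    unfold l2norm
    simp only [Pi.add_apply]
    rw [hadd2]
  have hlsub : l2norm (u - v) = Real.sqrt 2 := by
    unfold l2norm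
    simp only [Pi.sub_apply]
    rw [hsub2]
  -- upper bound on A
  have hA : ∑ i, (F.mulVec (u + v)) i ^ 2 ≤ (1 + δ) * 2 := by
    have h2 := (hrip (u + v) hspadd).2
    rw [hladd] at h2
    have h3 : l2norm (F.mulVec (u + v)) ^ 2 ≤ (Real.sqrt (1 + δ) * Real.sqrt 2) ^ 2 :=
      pow_le_pow_left₀ (l2norm_nonneg' _) h2 2
    rw [l2norm_sq'] at h3
    calc ∑ i, (F.mulVec (u + v)) i ^ 2 ≤ (Real.sqrt (1 + δ) * Real.sqrt 2) ^ 2 := h3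
      _ = (1 + δ) * 2 := by
          rw [mul_pow, Real.sq_sqrt (by linarith : (0:ℝ) ≤ 1 + δ),
            Real.sq_sqrt (by norm_num : (0:ℝ) ≤ 2)]
  have hkey : 4 * ∑ i, F.mulVec u i * F.mulVec v i =
      (∑ i, (F.mulVec (u + v)) i ^ 2) - ∑ i, (F.mulVec (u - v)) i ^ 2 := by
    rw [Finset.mul_sum, ← Finset.sum_sub_distrib]
    refine Finset.sum_congr rfl fun i _ => ?_
    have h1 : F.mulVec (u + v) i = F.mulVec u i + F.mulVec v i := by
      rw [Matrix.mulVec_add]; rfl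
    have h2 : F.mulVec (u - v) i = F.mulVec u i - F.mulVec v i := by
      rw [Matrix.mulVec_sub]; rfl
    rw [h1, h2]; ring
  by_cases hcase : δ ≤ 1
  · have hB : (1 - δ) * 2 ≤ ∑ i, (F.mulVec (u - v)) i ^ 2 := by
      have h2 := (hrip (u - v) hspsub).1
      rw [hlsub] at h2
      have h3 : (Real.sqrt (1 - δ) * Real.sqrt 2) ^ 2 ≤ l2norm (F.mulVec (u - v)) ^ 2 :=
        pow_le_pow_left₀ (by positivity) h2 2
      rw [l2norm_sq'] at h3
      calc (1 - δ) * 2 = (Real.sqrt (1 - δ) * Real.sqrt 2) ^ 2 := by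
            rw [mul_pow, Real.sq_sqrt (by linarith : (0:ℝ) ≤ 1 - δ),
              Real.sq_sqrt (by norm_num : (0:ℝ) ≤ 2)]
        _ ≤ _ := h3
    linarith
  · have hB : (0:ℝ) ≤ ∑ i, (F.mulVec (u - v)) i ^ 2 := sum_sq_nonneg' _
    push_neg at hcase
    linarith

lemma ortho_abs {n p : ℕ} (F : Matrix (Fin n) (Fin p) ℝ) {K : ℕ} {δ : ℝ}
    (hδ : -1 ≤ δ) (hrip : δ ∈ ripSet F K)
    {k k' : ℕ} (hkk : k + k' ≤ K)
    (c d : Fin p → ℝ) (hc : IsSparse k c) (hd : IsSparse k' d)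
    (hdisj : ∀ i, c i = 0 ∨ d i = 0) :
    |∑ i, F.mulVec c i * F.mulVec d i| ≤ δ * (l2norm c * l2norm d) := by
  by_cases hc0 : l2norm c = 0
  · have hz : ∀ i, c i = 0 := l2norm_eq_zero' hc0
    have hm : F.mulVec c = 0 := by
      ext j; simp [Matrix.mulVec, dotProduct, hz]
    simp [hm, hc0]
  by_cases hd0 : l2norm d = 0
  · have hz : ∀ i, d i = 0 := l2norm_eq_zero' hd0
    have hm : F.mulVec d = 0 := by
      ext j; simp [Matrix.mulVec, dotProduct, hz]
    simp [hm, hd0]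
  have ha : 0 < l2norm c := lt_of_le_of_ne (l2norm_nonneg' c) (Ne.symm hc0)
  have hb : 0 < l2norm d := lt_of_le_of_ne (l2norm_nonneg' d) (Ne.symm hd0)
  set a := l2norm c
  set b := l2norm d
  set u : Fin p → ℝ := fun i => a⁻¹ * c i with hu_def
  set v : Fin p → ℝ := fun i => b⁻¹ * d i with hv_def
  have hu_sp : IsSparse k u := by
    obtain ⟨s, hs, hs0⟩ := hc
    exact ⟨s, hs, fun i hi => by simp [hu_def, hs0 i hi]⟩
  have hv_sp : IsSparse k' v := by
    obtain ⟨s, hs, hs0⟩ := hd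
    exact ⟨s, hs, fun i hi => by simp [hv_def, hs0 i hi]⟩
  have hu_disj : ∀ i, u i = 0 ∨ v i = 0 := fun i => by
    rcases hdisj i with h | h
    · exact Or.inl (by simp [hu_def, h])
    · exact Or.inr (by simp [hv_def, h])
  have hu1 : ∑ i, u i ^ 2 = 1 := by
    have h1 : ∑ i, u i ^ 2 = a⁻¹ ^ 2 * ∑ i, c i ^ 2 := by
      rw [Finset.mul_sum]
      exact Finset.sum_congr rfl fun i _ => by rw [hu_def]; ring
    rw [h1, ← l2norm_sq' c]
    field_simp
    rfl
  have hv1 : ∑ i, v i ^ 2 = 1 := by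
    have h1 : ∑ i, v i ^ 2 = b⁻¹ ^ 2 * ∑ i, d i ^ 2 := by
      rw [Finset.mul_sum]
      exact Finset.sum_congr rfl fun i _ => by rw [hv_def]; ring
    rw [h1, ← l2norm_sq' d]
    field_simp
    rfl
  have hmu : ∀ j, F.mulVec u j = a⁻¹ * F.mulVec c j := by
    intro j
    simp only [Matrix.mulVec, dotProduct, hu_def, Finset.mul_sum]
    exact Finset.sum_congr rfl fun i _ => by ring
  have hmv : ∀ j, F.mulVec v j = b⁻¹ * F.mulVec d j := by
    intro j
    simp only [Matrix.mulVec, dotProduct, hv_def, Finset.mul_sum]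
    exact Finset.sum_congr rfl fun i _ => by ring
  have hscale : ∑ i, F.mulVec u i * F.mulVec v i =
      (a⁻¹ * b⁻¹) * ∑ i, F.mulVec c i * F.mulVec d i := by
    rw [Finset.mul_sum]
    exact Finset.sum_congr rfl fun i _ => by rw [hmu, hmv]; ring
  have h1 : ∑ i, F.mulVec u i * F.mulVec v i ≤ δ :=
    ortho_one_sided F hδ hrip hkk u v hu_sp hv_sp hu_disj hu1 hv1
  have hv_sp' : IsSparse k' (fun i => -v i) := by
    obtain ⟨s, hs, hs0⟩ := hv_sp
    exact ⟨s, hs, fun i hi => by simp [hs0 i hi]⟩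
  have hu_disj' : ∀ i, u i = 0 ∨ -v i = 0 := fun i => by
    rcases hu_disj i with h | h
    · exact Or.inl h
    · exact Or.inr (by simp [h])
  have hv1' : ∑ i, (-v i) ^ 2 = 1 := by simpa using hv1
  have h2 : ∑ i, F.mulVec u i * F.mulVec (fun i => -v i) i ≤ δ :=
    ortho_one_sided F hδ hrip hkk u (fun i => -v i) hu_sp hv_sp' hu_disj' hu1 hv1'
  have hneg : ∀ j, F.mulVec (fun i => -v i) j = -(F.mulVec v j) := by
    intro j
    simp only [Matrix.mulVec, dotProduct]
    rw [← Finset.sum_neg_distrib]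
    exact Finset.sum_congr rfl fun i _ => by ring
  have h3 : -(∑ i, F.mulVec u i * F.mulVec v i) ≤ δ := by
    rw [← Finset.sum_neg_distrib]
    calc ∑ i, -(F.mulVec u i * F.mulVec v i)
        = ∑ i, F.mulVec u i * F.mulVec (fun i => -v i) i :=
          Finset.sum_congr rfl fun i _ => by rw [hneg]; ring
      _ ≤ δ := h2
  have habs : |∑ i, F.mulVec u i * F.mulVec v i| ≤ δ := abs_le.2 ⟨by linarith, h1⟩
  rw [hscale, abs_mul, abs_of_pos (by positivity : (0:ℝ) < a⁻¹ * b⁻¹)] at habs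
  have := mul_le_mul_of_nonneg_left habs (le_of_lt (mul_pos ha hb))
  calc |∑ i, F.mulVec c i * F.mulVec d i|
      = (a * b) * ((a⁻¹ * b⁻¹) * |∑ i, F.mulVec c i * F.mulVec d i|) := by
        field_simp
    _ ≤ (a * b) * δ := this
    _ = δ * (a * b) := by ring

lemma exists_decomp {p : ℕ} : ∀ (l : ℕ) (ks : Fin l → ℕ) (s : Finset (Fin p)),
    s.card ≤ ∑ i, ks i →
    ∃ t : Fin l → Finset (Fin p), (∀ i, (t i).card ≤ ks i) ∧ (∀ i, t i ⊆ s) ∧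
      (∀ i j, i ≠ j → Disjoint (t i) (t j)) ∧ (∀ x ∈ s, ∃ i, x ∈ t i) := by
  intro l
  induction l with
  | zero =>
    intro ks s hs
    simp only [Finset.univ_eq_empty, Finset.sum_empty, Nat.le_zero,
      Finset.card_eq_zero] at hs
    subst hs
    exact ⟨fun i => ∅, fun i => i.elim0, fun i => i.elim0, fun i => i.elim0,
      fun x hx => absurd hx (Finset.notMem_empty x)⟩
  | succ l ih =>
    intro ks s hs
    rw [Fin.sum_univ_succ] at hs
    have hmin : min (ks 0) s.card ≤ s.card := min_le_right _ _
    obtain ⟨s₀, hs₀sub, hs₀card⟩ := Finset.exists_subset_card_eq hmin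
    set s₁ := s \ s₀ with hs₁
    have hs₁card : s₁.card ≤ ∑ i, ks (Fin.succ i) := by
      rw [hs₁, Finset.card_sdiff_of_subset hs₀sub, hs₀card]
      omega
    obtain ⟨t', ht'card, ht'sub, ht'disj, ht'cov⟩ := ih (fun i => ks (Fin.succ i)) s₁ hs₁card
    refine ⟨Fin.cons s₀ t', ?_, ?_, ?_, ?_⟩
    · intro i
      induction i using Fin.cases with
      | zero => simpa [hs₀card] using min_le_left (ks 0) s.card
      | succ j => simpa using ht'card j
    · intro i
      induction i using Fin.cases with
      | zero => simpa using hs₀sub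
      | succ j =>
        simp only [Fin.cons_succ]
        exact (ht'sub j).trans (Finset.sdiff_subset)
    · intro i j hij
      induction i using Fin.cases with
      | zero =>
        induction j using Fin.cases with
        | zero => exact absurd rfl hij
        | succ j' =>
          simp only [Fin.cons_zero, Fin.cons_succ]
          exact Finset.disjoint_of_subset_right (ht'sub j') Finset.disjoint_sdiff
      | succ i' =>
        induction j using Fin.cases with
        | zero =>
          simp only [Fin.cons_zero, Fin.cons_succ]
          exact Finset.disjoint_of_subset_left (ht'sub i') Finset.sdiff_disjoint
        | succ j' =>
          simp only [Fin.cons_succ]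
          exact ht'disj i' j' (fun h => hij (by rw [h]))
    · intro x hx
      by_cases hx0 : x ∈ s₀
      · exact ⟨0, by simpa using hx0⟩
      · have hx1 : x ∈ s₁ := Finset.mem_sdiff.2 ⟨hx, hx0⟩
        obtain ⟨i, hi⟩ := ht'cov x hx1
        exact ⟨Fin.succ i, by simpa using hi⟩


/-- For positive integers `k, k₁, …, k_l` with `k + k₁ + ⋯ + k_l ≤ p`,
`θ_{k, k₁+⋯+k_l} ≤ √(δ_{k+k₁}² + ⋯ + δ_{k+k_l}²)`. -/
theorem roConst_le_sqrt_sum_ripConst {n p : ℕ} (F : Matrix (Fin n) (Fin p) ℝ)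
    (k : ℕ) (hk : 1 ≤ k) (l : ℕ) (ks : Fin l → ℕ) (hks : ∀ i, 1 ≤ ks i)
    (hsum : k + ∑ i, ks i ≤ p) :
    roConst F k (∑ i, ks i) ≤ Real.sqrt (∑ i, (ripConst F (k + ks i)) ^ 2) := by
  rcases Nat.eq_zero_or_pos l with hl | hl
  · subst hl
    have h0 : (∑ i : Fin 0, ks i) = 0 := rfl
    have hset : {θ : ℝ | ∀ c c' : Fin p → ℝ, IsSparse k c → IsSparse (∑ i, ks i) c' →
        (∀ i, c i = 0 ∨ c' i = 0) →
        |∑ i, F.mulVec c i * F.mulVec c' i| ≤ θ * (l2norm c * l2norm c')} = Set.univ := by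
      ext θ
      simp only [Set.mem_setOf_eq, Set.mem_univ, iff_true]
      intro c c' _ hc' _
      obtain ⟨s, hs, hs0⟩ := hc'
      rw [h0, Nat.le_zero, Finset.card_eq_zero] at hs
      subst hs
      have hz : ∀ i, c' i = 0 := fun i => hs0 i (Finset.notMem_empty i)
      have hm : F.mulVec c' = 0 := by
        ext j; simp [Matrix.mulVec, dotProduct, hz]
      have hn : l2norm c' = 0 := by simp [l2norm, hz]
      simp [hm, hn]
    rw [roConst, hset]
    have : ¬ BddBelow (Set.univ : Set ℝ) := by
      intro ⟨b, hb⟩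
      have := hb (Set.mem_univ (b - 1))
      linarith
    rw [Real.sInf_of_not_bddBelow this]
    simp
  -- main case l ≥ 1
  have hp : 0 < p := by
    have : 1 ≤ ∑ i, ks i := le_trans hl (by
      calc l = ∑ _i : Fin l, 1 := by simp
        _ ≤ ∑ i, ks i := Finset.sum_le_sum fun i _ => hks i)
    omega
  have hSig : 1 ≤ ∑ i, ks i := le_trans hl (by
    calc l = ∑ _i : Fin l, 1 := by simp
      _ ≤ ∑ i, ks i := Finset.sum_le_sum fun i _ => hks i)
  have hp2 : 2 ≤ p := by omega
  -- bddBelow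
  have hbdd : BddBelow {θ : ℝ | ∀ c c' : Fin p → ℝ, IsSparse k c → IsSparse (∑ i, ks i) c' →
      (∀ i, c i = 0 ∨ c' i = 0) →
      |∑ i, F.mulVec c i * F.mulVec c' i| ≤ θ * (l2norm c * l2norm c')} := by
    refine ⟨0, fun θ hθ => ?_⟩
    set e0 : Fin p → ℝ := fun i => if i = ⟨0, by omega⟩ then 1 else 0 with he0
    set e1 : Fin p → ℝ := fun i => if i = ⟨1, by omega⟩ then 1 else 0 with he1
    have hsp0 : IsSparse k e0 := ⟨{⟨0, by omega⟩}, by simpa using hk,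
      fun i hi => by simp only [Finset.mem_singleton] at hi; simp [he0, hi]⟩
    have hsp1 : IsSparse (∑ i, ks i) e1 := ⟨{⟨1, by omega⟩}, by simpa using hSig,
      fun i hi => by simp only [Finset.mem_singleton] at hi; simp [he1, hi]⟩
    have hdisj : ∀ i, e0 i = 0 ∨ e1 i = 0 := by
      intro i
      by_cases h : i = ⟨0, by omega⟩
      · right; rw [he1]; simp only [h]
        have hne : (⟨0, by omega⟩ : Fin p) ≠ ⟨1, by omega⟩ :=
          Fin.ne_of_val_ne (by norm_num)
        simp [hne]
      · left; simp [he0, h]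
    have hn0 : l2norm e0 = 1 := by
      have : ∑ i, e0 i ^ 2 = 1 := by rw [he0]; simp [apply_ite (· ^ 2 : ℝ → ℝ)]
      simp [l2norm, this]
    have hn1 : l2norm e1 = 1 := by
      have : ∑ i, e1 i ^ 2 = 1 := by rw [he1]; simp [apply_ite (· ^ 2 : ℝ → ℝ)]
      simp [l2norm, this]
    have := hθ e0 e1 hsp0 hsp1 hdisj
    rw [hn0, hn1] at this
    have habs : (0:ℝ) ≤ |∑ i, F.mulVec e0 i * F.mulVec e1 i| := abs_nonneg _
    nlinarith
  -- membership
  have hmem : Real.sqrt (∑ i, (ripConst F (k + ks i)) ^ 2) ∈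
      {θ : ℝ | ∀ c c' : Fin p → ℝ, IsSparse k c → IsSparse (∑ i, ks i) c' →
      (∀ i, c i = 0 ∨ c' i = 0) →
      |∑ i, F.mulVec c i * F.mulVec c' i| ≤ θ * (l2norm c * l2norm c')} := by
    intro c c' hc hc' hdisj
    obtain ⟨s', hs'card, hs'0⟩ := hc'
    obtain ⟨t, htcard, htsub, htdisj, htcov⟩ := exists_decomp l ks s' hs'card
    set d : Fin l → Fin p → ℝ := fun i j => if j ∈ t i then c' j else 0 with hd
    have hd_sparse : ∀ i, IsSparse (ks i) (d i) :=
      fun i => ⟨t i, htcard i, fun j hj => by simp [hd, hj]⟩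
    have hd_disj : ∀ i j, c j = 0 ∨ d i j = 0 := by
      intro i j
      by_cases hj : j ∈ t i
      · rcases hdisj j with h | h
        · exact Or.inl h
        · exact Or.inr (by simp [hd, h])
      · exact Or.inr (by simp [hd, hj])
    have hsum_d : ∀ j, ∑ i, d i j = c' j := by
      intro j
      by_cases hj : j ∈ s'
      · obtain ⟨i₀, hi₀⟩ := htcov j hj
        rw [Finset.sum_eq_single_of_mem i₀ (Finset.mem_univ i₀)]
        · simp [hd, hi₀]
        · intro i _ hne
          have : j ∉ t i := fun hji =>
            Finset.disjoint_left.1 (htdisj i i₀ hne) hji hi₀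
          simp [hd, this]
      · have hz : c' j = 0 := hs'0 j hj
        simp [hd, hz]
    have hsumsq : ∑ i, (l2norm (d i)) ^ 2 = (l2norm c') ^ 2 := by
      rw [l2norm_sq' c']
      have h1 : ∀ i, (l2norm (d i)) ^ 2 = ∑ j, d i j ^ 2 := fun i => l2norm_sq' _
      simp_rw [h1]
      rw [Finset.sum_comm]
      refine Finset.sum_congr rfl fun j _ => ?_
      by_cases hj : j ∈ s'
      · obtain ⟨i₀, hi₀⟩ := htcov j hj
        rw [Finset.sum_eq_single_of_mem i₀ (Finset.mem_univ i₀)]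
        · simp [hd, hi₀]
        · intro i _ hne
          have : j ∉ t i := fun hji =>
            Finset.disjoint_left.1 (htdisj i i₀ hne) hji hi₀
          simp [hd, this]
      · have hz : c' j = 0 := hs'0 j hj
        rw [hz, zero_pow two_ne_zero]
        refine Finset.sum_eq_zero fun i _ => ?_
        by_cases hji : j ∈ t i <;> simp [hd, hji, hz]
    have hmv : ∀ r, F.mulVec c' r = ∑ i, F.mulVec (d i) r := by
      intro r
      simp only [Matrix.mulVec, dotProduct]
      rw [Finset.sum_comm]
      refine Finset.sum_congr rfl fun q _ => ?_
      rw [← Finset.mul_sum, hsum_d]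
    set δf : Fin l → ℝ := fun i => ripConst F (k + ks i) with hδf
    have hδmem : ∀ i, δf i ∈ ripSet F (k + ks i) :=
      fun i => ripConst_mem F hp (by have := hks i; omega)
    have hδge : ∀ i, -1 ≤ δf i :=
      fun i => mem_ripSet_ge hp (by have := hks i; omega) (hδmem i)
    have hterm : ∀ i, |∑ r, F.mulVec c r * F.mulVec (d i) r| ≤
        δf i * (l2norm c * l2norm (d i)) :=
      fun i => ortho_abs F (hδge i) (hδmem i) (le_refl (k + ks i)) c (d i) hc
        (hd_sparse i) (hd_disj i)
    have hsplit : ∑ r, F.mulVec c r * F.mulVec c' r =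
        ∑ i, ∑ r, F.mulVec c r * F.mulVec (d i) r := by
      rw [Finset.sum_comm]
      refine Finset.sum_congr rfl fun r _ => ?_
      rw [← Finset.mul_sum, ← hmv]
    -- Cauchy–Schwarz
    have hCS : ∑ i, δf i * l2norm (d i) ≤
        Real.sqrt (∑ i, δf i ^ 2) * l2norm c' := by
      have h1 := Finset.sum_mul_sq_le_sq_mul_sq Finset.univ δf (fun i => l2norm (d i))
      have h2 : ∑ i, δf i * l2norm (d i) ≤
          Real.sqrt ((∑ i, δf i ^ 2) * ∑ i, (l2norm (d i)) ^ 2) := by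
        calc ∑ i, δf i * l2norm (d i)
            ≤ |∑ i, δf i * l2norm (d i)| := le_abs_self _
          _ = Real.sqrt ((∑ i, δf i * l2norm (d i)) ^ 2) := (Real.sqrt_sq_eq_abs _).symm
          _ ≤ Real.sqrt ((∑ i, δf i ^ 2) * ∑ i, (l2norm (d i)) ^ 2) :=
              Real.sqrt_le_sqrt h1
      rw [hsumsq] at h2
      rwa [Real.sqrt_mul (Finset.sum_nonneg fun i _ => sq_nonneg _),
        Real.sqrt_sq (l2norm_nonneg' c')] at h2
    calc |∑ r, F.mulVec c r * F.mulVec c' r|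
        = |∑ i, ∑ r, F.mulVec c r * F.mulVec (d i) r| := by rw [hsplit]
      _ ≤ ∑ i, |∑ r, F.mulVec c r * F.mulVec (d i) r| := Finset.abs_sum_le_sum_abs _ _
      _ ≤ ∑ i, δf i * (l2norm c * l2norm (d i)) := Finset.sum_le_sum fun i _ => hterm i
      _ = l2norm c * ∑ i, δf i * l2norm (d i) := by
          rw [Finset.mul_sum]; exact Finset.sum_congr rfl fun i _ => by ring
      _ ≤ l2norm c * (Real.sqrt (∑ i, δf i ^ 2) * l2norm c') :=
          mul_le_mul_of_nonneg_left hCS (l2norm_nonneg' c)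
      _ = Real.sqrt (∑ i, (ripConst F (k + ks i)) ^ 2) * (l2norm c * l2norm c') := by
          rw [hδf]; ring
  exact csInf_le hbdd hmem
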